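/- Let L be an infinite locally compact Hausdorff topological space and let 𝒜 be a somewhat regular linear subspace of C₀(L). Then for every non-empty open subset V of L and every real number ε with 0 < ε < 1 there exist a point x₀ ∈ V and a function f ∈ 𝒜 such that (1) f(x₀) = 1 ≤ ‖f‖ ≤ 1 + ε; (2) |1 − f(x)| ≤ 1 + ε for every x ∈ V; and (3) |f(x)| ≤ ε for every x ∈ L \ V. -/

import Mathlib

open scoped ZeroAtInfty

/-- A linear subspace `𝒜` of `C₀(L, ℝ)` is *somewhat regular* if for every non-empty open
subset `V` of `L` and every `ε` with `0 < ε < 1` there is `f ∈ 𝒜` with `‖f‖ = 1` and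
`|f x| ≤ ε` for every `x ∈ L \ V`. -/
def SomewhatRegular {L : Type*} [TopologicalSpace L]
    (𝒜 : Submodule ℝ C₀(L, ℝ)) : Prop :=
  ∀ V : Set L, IsOpen V → V.Nonempty → ∀ ε : ℝ, 0 < ε → ε < 1 →
    ∃ f ∈ 𝒜, ‖f‖ = 1 ∧ ∀ x ∉ V, |f x| ≤ ε

lemma abs_apply_le_norm {L : Type*} [TopologicalSpace L] (f : C₀(L, ℝ)) (x : L) :
    |f x| ≤ ‖f‖ := by
  rw [← ZeroAtInftyContinuousMap.norm_toBCF_eq_norm]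
  exact (Real.norm_eq_abs _) ▸ f.toBCF.norm_coe_le_norm x

lemma norm_le_of_forall {L : Type*} [TopologicalSpace L] (f : C₀(L, ℝ)) (c : ℝ) (hc : 0 ≤ c)
    (h : ∀ x, |f x| ≤ c) : ‖f‖ ≤ c := by
  rw [← ZeroAtInftyContinuousMap.norm_toBCF_eq_norm]
  exact BoundedContinuousFunction.norm_le hc |>.2 fun x => (Real.norm_eq_abs _) ▸ h x

/-- One step: a function of norm one, small off `W`, together with the nonempty open
subset of `W` where it is close to `1`. -/
lemma somewhat_regular_step {L : Type*} [TopologicalSpace L]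
    (𝒜 : Submodule ℝ C₀(L, ℝ)) (h𝒜 : SomewhatRegular 𝒜)
    (δ : ℝ) (hδ0 : 0 < δ) (hδ1 : δ < 1 / 2)
    (W : Set L) (hW : IsOpen W) (hWne : W.Nonempty) :
    ∃ g ∈ 𝒜, ‖g‖ = 1 ∧ (∀ x ∉ W, |g x| ≤ δ) ∧
      (W ∩ {x | 1 - δ < g x}).Nonempty := by
  obtain ⟨g₀, hg₀𝒜, hg₀n, hg₀s⟩ := h𝒜 W hW hWne δ hδ0 (by linarith)
  have hx : ∃ x, 1 - δ < |g₀ x| := by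
    by_contra h
    push_neg at h
    have : ‖g₀‖ ≤ 1 - δ := norm_le_of_forall g₀ _ (by linarith) h
    rw [hg₀n] at this; linarith
  obtain ⟨x, hx⟩ := hx
  have hxW : x ∈ W := by
    by_contra hxW
    have := hg₀s x hxW
    linarith
  rcases le_or_gt (g₀ x) 0 with hsign | hsign
  · refine ⟨-g₀, neg_mem hg₀𝒜, by rw [norm_neg, hg₀n], ?_, ⟨x, hxW, ?_⟩⟩
    · intro y hy
      have := hg₀s y hy
      simpa [abs_neg] using this
    · have : |g₀ x| = -(g₀ x) := abs_of_nonpos hsign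
      simp only [Set.mem_setOf_eq, ZeroAtInftyContinuousMap.coe_neg, Pi.neg_apply]
      linarith
  · refine ⟨g₀, hg₀𝒜, hg₀n, hg₀s, ⟨x, hxW, ?_⟩⟩
    have : |g₀ x| = g₀ x := abs_of_pos hsign
    simp only [Set.mem_setOf_eq]
    linarith

/-- Iterated construction: a sum `s` of `n+1` norm-one functions, each close to `1`
on a nested nonempty open set `U ⊆ V`. -/
lemma somewhat_regular_sum {L : Type*} [TopologicalSpace L]
    (𝒜 : Submodule ℝ C₀(L, ℝ)) (h𝒜 : SomewhatRegular 𝒜)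
    (δ : ℝ) (hδ0 : 0 < δ) (hδ1 : δ < 1 / 2) :
    ∀ n : ℕ, ∀ V : Set L, IsOpen V → V.Nonempty →
      ∃ U : Set L, IsOpen U ∧ U.Nonempty ∧ U ⊆ V ∧
      ∃ s ∈ 𝒜, (∀ x, |s x| ≤ (n : ℝ) + 1) ∧
        (∀ x ∈ U, ((n : ℝ) + 1) * (1 - δ) < s x) ∧
        (∀ x ∈ V, -1 - ((n : ℝ) + 1) * δ ≤ s x) ∧
        (∀ x ∉ V, |s x| ≤ ((n : ℝ) + 1) * δ) := by
  intro n
  induction n with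
  | zero =>
    intro V hV hVne
    obtain ⟨g, hg𝒜, hgn, hgs, hUne⟩ := somewhat_regular_step 𝒜 h𝒜 δ hδ0 hδ1 V hV hVne
    refine ⟨V ∩ {x | 1 - δ < g x}, hV.inter (isOpen_lt continuous_const (map_continuous g)),
      hUne, Set.inter_subset_left, g, hg𝒜, ?_, ?_, ?_, ?_⟩
    · intro x; have := abs_apply_le_norm g x; rw [hgn] at this; push_cast; linarith
    · intro x hx; have := hx.2; simp only [Set.mem_setOf_eq] at this; push_cast; linarith
    · intro x _
      have := abs_apply_le_norm g x; rw [hgn] at this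
      have := neg_abs_le (g x); push_cast; linarith
    · intro x hx; have := hgs x hx; push_cast; linarith
  | succ n ih =>
    intro V hV hVne
    obtain ⟨U, hU, hUne, hUV, s, hs𝒜, hsb, hsU, hsV, hso⟩ := ih V hV hVne
    obtain ⟨g, hg𝒜, hgn, hgs, hU'ne⟩ := somewhat_regular_step 𝒜 h𝒜 δ hδ0 hδ1 U hU hUne
    have hgb : ∀ x, |g x| ≤ 1 := by
      intro x; have := abs_apply_le_norm g x; rw [hgn] at this; exact this
    refine ⟨U ∩ {x | 1 - δ < g x}, hU.inter (isOpen_lt continuous_const (map_continuous g)),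
      hU'ne, Set.inter_subset_left.trans hUV, s + g, add_mem hs𝒜 hg𝒜, ?_, ?_, ?_, ?_⟩
    · intro x
      have h1 := hsb x; have h2 := hgb x
      have : |s x + g x| ≤ |s x| + |g x| := abs_add_le _ _
      push_cast
      show |s x + g x| ≤ _
      linarith
    · intro x hx
      have h1 := hsU x hx.1
      have h2 := hx.2
      simp only [Set.mem_setOf_eq] at h2
      push_cast at h1 ⊢
      show ((n : ℝ) + 1 + 1) * (1 - δ) < s x + g x
      nlinarith
    · intro x hxV
      push_cast
      show -1 - ((n : ℝ) + 1 + 1) * δ ≤ s x + g x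
      by_cases hxU : x ∈ U
      · have h1 := hsU x hxU
        have h2 := neg_abs_le (g x)
        have h3 := hgb x
        nlinarith [hδ0.le, hδ1]
      · have h1 := hsV x hxV
        have h2 := hgs x hxU
        have h3 := neg_abs_le (g x)
        linarith
    · intro x hxV
      have h1 := hso x hxV
      have h2 := hgs x (fun hxU => hxV (hUV hxU))
      have : |s x + g x| ≤ |s x| + |g x| := abs_add_le _ _
      show |s x + g x| ≤ _
      push_cast at h1 ⊢
      linarith

theorem urysohn_for_somewhat_regular
    {L : Type*} [TopologicalSpace L] [LocallyCompactSpace L] [T2Space L] [Infinite L]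
    (𝒜 : Submodule ℝ C₀(L, ℝ)) (h𝒜 : SomewhatRegular 𝒜)
    (V : Set L) (hV : IsOpen V) (hVne : V.Nonempty)
    (ε : ℝ) (hε0 : 0 < ε) (hε1 : ε < 1) :
    ∃ x₀ ∈ V, ∃ f ∈ 𝒜,
      f x₀ = 1 ∧ 1 ≤ ‖f‖ ∧ ‖f‖ ≤ 1 + ε ∧
      (∀ x ∈ V, |1 - f x| ≤ 1 + ε) ∧
      (∀ x ∉ V, |f x| ≤ ε) := by
  set δ : ℝ := ε / 4 with hδdef
  have hδ0 : 0 < δ := by positivity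
  have hδ1 : δ < 1 / 2 := by rw [hδdef]; linarith
  obtain ⟨n, hn⟩ : ∃ n : ℕ, 4 ≤ ((n : ℝ) + 1) * ε := by
    obtain ⟨n, hn⟩ := exists_nat_gt (4 / ε)
    refine ⟨n, ?_⟩
    have : 4 / ε < (n : ℝ) + 1 := by linarith
    calc (4 : ℝ) = 4 / ε * ε := by field_simp
    _ ≤ ((n : ℝ) + 1) * ε := by nlinarith
  obtain ⟨U, hU, hUne, hUV, s, hs𝒜, hsb, hsU, hsV, hso⟩ :=
    somewhat_regular_sum 𝒜 h𝒜 δ hδ0 hδ1 n V hV hVne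
  obtain ⟨x₀, hx₀U⟩ := hUne
  set m : ℝ := (n : ℝ) + 1 with hmdef
  have hm1 : (1 : ℝ) ≤ m := by
    rw [hmdef]; have := Nat.cast_nonneg (α := ℝ) n; linarith
  set c : ℝ := s x₀ with hcdef
  have hc_lb : m * (1 - δ) < c := hsU x₀ hx₀U
  have hc0 : 0 < c := by nlinarith
  refine ⟨x₀, hUV hx₀U, c⁻¹ • s, Submodule.smul_mem 𝒜 _ hs𝒜, ?_⟩
  have happ : ∀ x, (c⁻¹ • s) x = c⁻¹ * s x := fun x => rfl
  have hfx₀ : (c⁻¹ • s) x₀ = 1 := by rw [happ]; field_simp; exact hcdef.symm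
  -- key arithmetic facts
  have keyA : m / c ≤ 1 + ε := by
    rw [div_le_iff₀ hc0]
    have : δ = ε / 4 := hδdef
    nlinarith
  have keyB : (1 + m * δ) / c ≤ ε := by
    rw [div_le_iff₀ hc0]
    have : δ = ε / 4 := hδdef
    nlinarith
  have keyC : m * δ / c ≤ ε := by
    rw [div_le_iff₀ hc0]
    have : δ = ε / 4 := hδdef
    nlinarith
  have hnorm_le : ‖c⁻¹ • s‖ ≤ 1 + ε := by
    apply norm_le_of_forall _ _ (by linarith)
    intro x
    rw [happ, abs_mul, abs_of_pos (inv_pos.2 hc0)]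
    have := hsb x
    calc c⁻¹ * |s x| ≤ c⁻¹ * m := by
          apply mul_le_mul_of_nonneg_left _ (inv_pos.2 hc0).le
          exact this
    _ = m / c := by rw [div_eq_inv_mul]
    _ ≤ 1 + ε := keyA
  have hnorm_ge : 1 ≤ ‖c⁻¹ • s‖ := by
    have := abs_apply_le_norm (c⁻¹ • s) x₀
    rw [hfx₀] at this
    simpa using this
  refine ⟨hfx₀, hnorm_ge, hnorm_le, ?_, ?_⟩
  · intro x hxV
    have hup : (c⁻¹ • s) x ≤ 1 + ε := by
      have h1 := abs_apply_le_norm (c⁻¹ • s) x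
      have h2 := le_abs_self ((c⁻¹ • s) x)
      linarith
    have hlo : -ε ≤ (c⁻¹ • s) x := by
      rw [happ]
      have h1 := hsV x hxV
      have h2 : c⁻¹ * (-1 - m * δ) ≤ c⁻¹ * s x :=
        mul_le_mul_of_nonneg_left h1 (inv_pos.2 hc0).le
      have h3 : c⁻¹ * (-1 - m * δ) = -((1 + m * δ) / c) := by
        field_simp; ring
      rw [h3] at h2
      linarith [keyB]
    rw [abs_le]
    constructor <;> linarith
  · intro x hxV
    rw [happ, abs_mul, abs_of_pos (inv_pos.2 hc0)]
    have h1 := hso x hxV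
    calc c⁻¹ * |s x| ≤ c⁻¹ * (m * δ) :=
          mul_le_mul_of_nonneg_left h1 (inv_pos.2 hc0).le
    _ = m * δ / c := by rw [div_eq_inv_mul]
    _ ≤ ε := keyC
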